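/- Let d ≥ 1 and α > 0. There is a constant C (depending only on d and α) such that for all R ≥ 1 (with R ∉ ℤ, 2R ∈ ℤ) and all i, k ∈ ℤ^d with |i - k| ≤ 2R: q_i := Σ_{ℓ ∈ B_R(k) ∩ B_R(i)} Σ_{j ∉ B_R(ℓ)} (1 + |i - j|)^{-(2d+α)} ≤ C R^{d-1}. -/

import Mathlib

open Finset

def nnu {d : ℕ} (x : Fin d → ℤ) : ℕ := Finset.univ.sup fun m => (x m).natAbs

lemma nnu_neg {d : ℕ} (x : Fin d → ℤ) : nnu (-x) = nnu x := by
  unfold nnu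
  congr 1
  funext m
  simp

lemma nnu_add_le {d : ℕ} (x y : Fin d → ℤ) : nnu (x + y) ≤ nnu x + nnu y := by
  refine Finset.sup_le fun m _ => ?_
  calc ((x + y) m).natAbs = (x m + y m).natAbs := rfl
    _ ≤ (x m).natAbs + (y m).natAbs := Int.natAbs_add_le _ _
    _ ≤ nnu x + nnu y :=
        add_le_add (Finset.le_sup (f := fun m => (x m).natAbs) (mem_univ m))
          (Finset.le_sup (f := fun m => (y m).natAbs) (mem_univ m))

lemma norm_eq_nnu {d : ℕ} (hd : 1 ≤ d) (x : Fin d → ℤ) : ‖x‖ = (nnu x : ℝ) := by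
  have hne : (Finset.univ : Finset (Fin d)).Nonempty := ⟨⟨0, hd⟩, mem_univ _⟩
  apply le_antisymm
  · refine (pi_norm_le_iff_of_nonneg (by positivity)).2 fun m => ?_
    rw [Int.norm_eq_abs, ← Int.cast_abs, ← Nat.cast_natAbs (α := ℝ)]
    exact_mod_cast Finset.le_sup (f := fun m => (x m).natAbs) (mem_univ m)
  · obtain ⟨m, _, hm⟩ := Finset.exists_mem_eq_sup univ hne fun m => (x m).natAbs
    rw [nnu, hm]
    calc ((x m).natAbs : ℝ) = ‖x m‖ := by
          rw [Int.norm_eq_abs, ← Int.cast_abs, ← Nat.cast_natAbs (α := ℝ)]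
      _ ≤ ‖x‖ := norm_le_pi_norm x m

lemma pow_add_le (b c : ℕ) : ∀ n : ℕ, (b + c) ^ (n + 1) ≤ b ^ (n + 1) + (n + 1) * c * (b + c) ^ n
  | 0 => by simp
  | (n + 1) => by
    have ih := pow_add_le b c n
    have hb : b ^ (n + 1) ≤ (b + c) ^ (n + 1) := Nat.pow_le_pow_left (by omega) _
    calc (b + c) ^ (n + 2) = (b + c) * (b + c) ^ (n + 1) := by ring
      _ ≤ (b + c) * (b ^ (n + 1) + (n + 1) * c * (b + c) ^ n) := Nat.mul_le_mul_left _ ih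
      _ = b * b ^ (n + 1) + c * b ^ (n + 1) + (n + 1) * c * (b + c) ^ (n + 1) := by ring
      _ ≤ b ^ (n + 2) + c * (b + c) ^ (n + 1) + (n + 1) * c * (b + c) ^ (n + 1) := by
          have := Nat.mul_le_mul_left c hb
          have hpow : b * b ^ (n + 1) = b ^ (n + 2) := by ring
          omega
      _ = b ^ (n + 2) + (n + 2) * c * (b + c) ^ (n + 1) := by ring

lemma nnu_le_iff {d : ℕ} {x : Fin d → ℤ} {n : ℕ} :
    nnu x ≤ n ↔ ∀ m, (x m).natAbs ≤ n := by
  simp [nnu, Finset.sup_le_iff]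

noncomputable def ballF {d : ℕ} (i : Fin d → ℤ) (n : ℕ) : Finset (Fin d → ℤ) :=
  Finset.Icc (fun m => i m - n) (fun m => i m + n)

lemma mem_ballF {d : ℕ} {i x : Fin d → ℤ} {n : ℕ} :
    x ∈ ballF i n ↔ nnu (x - i) ≤ n := by
  rw [ballF, Finset.mem_Icc, nnu_le_iff]
  simp only [Pi.le_def, Pi.sub_apply]
  constructor
  · rintro ⟨h1, h2⟩ m
    have a := h1 m
    have b := h2 m
    omega
  · intro h
    exact ⟨fun m => by have := h m; omega, fun m => by have := h m; omega⟩

lemma card_ballF {d : ℕ} (i : Fin d → ℤ) (n : ℕ) : (ballF i n).card = (2 * n + 1) ^ d := by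
  rw [ballF, Pi.card_Icc]
  have h : ∀ m : Fin d, (Finset.Icc (i m - n) (i m + n)).card = 2 * n + 1 := fun m => by
    rw [Int.card_Icc]; omega
  simp [h]

lemma card_fiber {d : ℕ} (hd : 1 ≤ d) (F : Finset (Fin d → ℤ)) (i : Fin d → ℤ) (n : ℕ) :
    (F.filter fun x => nnu (x - i) = n).card ≤ d * 2 ^ d * (n + 1) ^ (d - 1) := by
  classical
  obtain ⟨e, rfl⟩ : ∃ e, d = e + 1 := ⟨d - 1, by omega⟩
  cases n with
  | zero =>
    have h1 : (F.filter fun x => nnu (x - i) = 0) ⊆ ballF i 0 := by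
      intro x hx
      rw [mem_ballF]
      exact (Finset.mem_filter.1 hx).2.le
    have h2 : (F.filter fun x => nnu (x - i) = 0).card ≤ 1 := by
      calc _ ≤ (ballF i 0).card := Finset.card_le_card h1
        _ = 1 := by rw [card_ballF]; simp
    have h3 : 0 < (e + 1) * 2 ^ (e + 1) * (0 + 1) ^ ((e + 1) - 1) := by positivity
    omega
  | succ s =>
    have hsub : (F.filter fun x => nnu (x - i) = s + 1) ⊆ ballF i (s + 1) \ ballF i s := by
      intro x hx
      have hx' := (Finset.mem_filter.1 hx).2
      rw [Finset.mem_sdiff, mem_ballF, mem_ballF]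
      omega
    have hss : ballF i s ⊆ ballF i (s + 1) := by
      intro x hx
      rw [mem_ballF] at *
      omega
    have hcard : (F.filter fun x => nnu (x - i) = s + 1).card
        ≤ (2 * s + 1 + 2) ^ (e + 1) - (2 * s + 1) ^ (e + 1) := by
      calc _ ≤ (ballF i (s + 1) \ ballF i s).card := Finset.card_le_card hsub
        _ = (ballF i (s + 1)).card - (ballF i s).card := Finset.card_sdiff_of_subset hss
        _ = (2 * s + 1 + 2) ^ (e + 1) - (2 * s + 1) ^ (e + 1) := by
            rw [card_ballF, card_ballF]
            have h9 : 2 * (s + 1) + 1 = 2 * s + 1 + 2 := by omega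
            rw [h9]
    have key := pow_add_le (2 * s + 1) 2 e
    have hmono : (2 * s + 1 + 2) ^ e ≤ (2 * (s + 2)) ^ e := Nat.pow_le_pow_left (by omega) e
    have h2pow : (2 * (s + 2)) ^ e = 2 ^ e * (s + 2) ^ e := Nat.mul_pow 2 (s + 2) e
    have hfin : (e + 1) * 2 * (2 ^ e * (s + 2) ^ e) = (e + 1) * 2 ^ (e + 1) * (s + 2) ^ e := by
      ring
    have hgoal : (e + 1) * 2 ^ (e + 1) * (s + 1 + 1) ^ ((e + 1) - 1)
        = (e + 1) * 2 ^ (e + 1) * (s + 2) ^ e := by norm_num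
    rw [hgoal]
    have hmul : (e + 1) * 2 * (2 * s + 1 + 2) ^ e ≤ (e + 1) * 2 * (2 ^ e * (s + 2) ^ e) := by
      apply Nat.mul_le_mul_left
      rw [← h2pow]
      exact hmono
    omega

noncomputable def Zc (s : ℝ) : ℝ := ∑' u : ℕ, (u : ℝ) ^ (-s)

lemma Zc_nonneg (s : ℝ) : 0 ≤ Zc s :=
  tsum_nonneg fun u => Real.rpow_nonneg (Nat.cast_nonneg u) _

lemma summable_zc {s : ℝ} (hs : 1 < s) : Summable fun u : ℕ => (u : ℝ) ^ (-s) :=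
  Real.summable_nat_rpow.2 (by linarith)

lemma sum_rpow_sub_le {s : ℝ} (hs : 1 < s) (m : ℕ) (t : Finset ℕ)
    (ht : ∀ n ∈ t, m + 1 ≤ n) :
    ∑ n ∈ t, ((n - m : ℕ) : ℝ) ^ (-s) ≤ Zc s := by
  have hinj : ∀ x ∈ t, ∀ y ∈ t, x - m = y - m → x = y := by
    intro x hx y hy h
    have := ht x hx
    have := ht y hy
    omega
  calc ∑ n ∈ t, ((n - m : ℕ) : ℝ) ^ (-s)
      = ∑ u ∈ t.image (· - m), (u : ℝ) ^ (-s) := (Finset.sum_image (f := fun u : ℕ => (u : ℝ) ^ (-s)) hinj).symm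
    _ ≤ Zc s := (summable_zc hs).sum_le_tsum _ (fun u _ => Real.rpow_nonneg (Nat.cast_nonneg u) _)

lemma tail_sum {d : ℕ} (hd : 1 ≤ d) {α : ℝ} (hα : 0 < α) (i : Fin d → ℤ) (m : ℕ)
    (F : Finset (Fin d → ℤ)) (hF : ∀ j ∈ F, m + 1 ≤ nnu (j - i)) :
    ∑ j ∈ F, (1 + ‖i - j‖) ^ (-(2 * (d : ℝ) + α)) ≤
      ((d : ℝ) * 2 ^ d) * ((m : ℝ) + 2) ^ (-((d : ℝ) + α / 2)) * Zc (1 + α / 2) := by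
  classical
  set p : ℝ := 2 * (d : ℝ) + α with hp
  set γ : ℝ := (d : ℝ) + α / 2 with hγ
  set q : ℝ := 1 + α / 2 with hq
  set b1 : ℝ := (m : ℝ) + 2 with hb1
  have hb1pos : 0 < b1 := by positivity
  have hrw : ∀ j : Fin d → ℤ, (1 + ‖i - j‖) = ((nnu (j - i) : ℝ) + 1) := by
    intro j
    rw [norm_eq_nnu hd, ← nnu_neg (i - j), neg_sub]
    ring
  have hsum : ∑ j ∈ F, (1 + ‖i - j‖) ^ (-p)
      = ∑ n ∈ F.image (fun j => nnu (j - i)),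
          (F.filter fun j => nnu (j - i) = n).card • (((n : ℝ) + 1) ^ (-p)) := by
    rw [← Finset.sum_comp (fun n : ℕ => ((n : ℝ) + 1) ^ (-p)) (fun j => nnu (j - i))]
    exact Finset.sum_congr rfl fun j _ => by rw [hrw j]
  rw [hsum]
  have hmem : ∀ n ∈ F.image (fun j => nnu (j - i)), m + 1 ≤ n := by
    intro n hn
    obtain ⟨j, hj, rfl⟩ := Finset.mem_image.1 hn
    exact hF j hj
  have hterm : ∀ n ∈ F.image (fun j => nnu (j - i)),
      (F.filter fun j => nnu (j - i) = n).card • (((n : ℝ) + 1) ^ (-p))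
      ≤ ((d : ℝ) * 2 ^ d) * b1 ^ (-γ) * ((n - m : ℕ) : ℝ) ^ (-q) := by
    intro n hn
    have hnm : m + 1 ≤ n := hmem n hn
    set x : ℝ := (n : ℝ) + 1 with hx
    have hxpos : 0 < x := by positivity
    have hcard : ((F.filter fun j => nnu (j - i) = n).card : ℝ)
        ≤ ((d : ℝ) * 2 ^ d) * x ^ (d - 1 : ℕ) := by
      have h := card_fiber hd F i n
      have : (((n + 1) ^ (d - 1) : ℕ) : ℝ) = x ^ (d - 1 : ℕ) := by push_cast; ring
      calc ((F.filter fun j => nnu (j - i) = n).card : ℝ)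
          ≤ ((d * 2 ^ d * (n + 1) ^ (d - 1) : ℕ) : ℝ) := by exact_mod_cast h
        _ = ((d : ℝ) * 2 ^ d) * x ^ (d - 1 : ℕ) := by push_cast; ring
    have hpow : x ^ (d - 1 : ℕ) * x ^ (-p) = x ^ (-((d : ℝ) + 1 + α)) := by
      rw [← Real.rpow_natCast x (d - 1), ← Real.rpow_add hxpos]
      congr 1
      have : ((d - 1 : ℕ) : ℝ) = (d : ℝ) - 1 := by
        have : (1 : ℕ) ≤ d := hd
        push_cast [Nat.cast_sub this]
        ring
      rw [this, hp]
      ring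
    set b2 : ℝ := ((n - m : ℕ) : ℝ) with hb2def
    have hb2ge : (1 : ℝ) ≤ b2 := by
      rw [hb2def]
      exact_mod_cast Nat.one_le_iff_ne_zero.2 (by omega)
    have hb2pos : 0 < b2 := lt_of_lt_of_le one_pos hb2ge
    have hb1x : b1 ≤ x := by
      rw [hb1, hx]
      have : (m : ℝ) + 1 ≤ (n : ℝ) := by exact_mod_cast hnm
      linarith
    have hb2x : b2 ≤ x := by
      rw [hb2def, hx]
      have : ((n - m : ℕ) : ℝ) ≤ (n : ℝ) := by exact_mod_cast Nat.sub_le n m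
      linarith
    have hmain : b1 ^ γ * b2 ^ q ≤ x ^ ((d : ℝ) + 1 + α) := by
      have h1 : b1 ^ γ ≤ x ^ γ := Real.rpow_le_rpow hb1pos.le hb1x (by rw [hγ]; positivity)
      have h2 : b2 ^ q ≤ x ^ q := Real.rpow_le_rpow hb2pos.le hb2x (by rw [hq]; positivity)
      calc b1 ^ γ * b2 ^ q ≤ x ^ γ * x ^ q :=
            mul_le_mul h1 h2 (Real.rpow_nonneg hb2pos.le _) (Real.rpow_nonneg hxpos.le _)
        _ = x ^ (γ + q) := (Real.rpow_add hxpos _ _).symm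
        _ = x ^ ((d : ℝ) + 1 + α) := by rw [hγ, hq]; ring_nf
    have hstep4 : x ^ (-((d : ℝ) + 1 + α)) ≤ b1 ^ (-γ) * b2 ^ (-q) := by
      rw [Real.rpow_neg hxpos.le, Real.rpow_neg hb1pos.le, Real.rpow_neg hb2pos.le,
        ← mul_inv]
      have hpos : 0 < b1 ^ γ * b2 ^ q := by positivity
      exact inv_anti₀ hpos hmain
    calc (F.filter fun j => nnu (j - i) = n).card • (x ^ (-p))
        = ((F.filter fun j => nnu (j - i) = n).card : ℝ) * x ^ (-p) := nsmul_eq_mul _ _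
      _ ≤ ((d : ℝ) * 2 ^ d) * x ^ (d - 1 : ℕ) * x ^ (-p) :=
          mul_le_mul_of_nonneg_right hcard (Real.rpow_nonneg hxpos.le _)
      _ = ((d : ℝ) * 2 ^ d) * (x ^ (d - 1 : ℕ) * x ^ (-p)) := by ring
      _ = ((d : ℝ) * 2 ^ d) * x ^ (-((d : ℝ) + 1 + α)) := by rw [hpow]
      _ ≤ ((d : ℝ) * 2 ^ d) * (b1 ^ (-γ) * b2 ^ (-q)) := by
          apply mul_le_mul_of_nonneg_left hstep4
          positivity
      _ = ((d : ℝ) * 2 ^ d) * b1 ^ (-γ) * b2 ^ (-q) := by ring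
  calc ∑ n ∈ F.image (fun j => nnu (j - i)),
        (F.filter fun j => nnu (j - i) = n).card • (((n : ℝ) + 1) ^ (-p))
      ≤ ∑ n ∈ F.image (fun j => nnu (j - i)),
          ((d : ℝ) * 2 ^ d) * b1 ^ (-γ) * ((n - m : ℕ) : ℝ) ^ (-q) :=
        Finset.sum_le_sum hterm
    _ = ((d : ℝ) * 2 ^ d) * b1 ^ (-γ) *
          ∑ n ∈ F.image (fun j => nnu (j - i)), ((n - m : ℕ) : ℝ) ^ (-q) := by
        rw [Finset.mul_sum]
    _ ≤ ((d : ℝ) * 2 ^ d) * b1 ^ (-γ) * Zc q := by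
        apply mul_le_mul_of_nonneg_left
          (sum_rpow_sub_le (by rw [hq]; linarith) m _ hmem)
        positivity
    _ = ((d : ℝ) * 2 ^ d) * b1 ^ (-γ) * Zc (1 + α / 2) := by rw [hq]

lemma sum_rpow_le2 {s : ℝ} (hs : 1 < s) (N : ℕ) (t : Finset ℕ)
    (ht : ∀ n ∈ t, n ≤ N) :
    ∑ n ∈ t, (((N - n : ℕ) : ℝ) + 2) ^ (-s) ≤ Zc s := by
  have hinj : ∀ x ∈ t, ∀ y ∈ t, N - x + 2 = N - y + 2 → x = y := by
    intro x hx y hy h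
    have := ht x hx
    have := ht y hy
    omega
  calc ∑ n ∈ t, (((N - n : ℕ) : ℝ) + 2) ^ (-s)
      = ∑ n ∈ t, ((N - n + 2 : ℕ) : ℝ) ^ (-s) := by
        refine Finset.sum_congr rfl fun n _ => ?_
        push_cast
        ring_nf
    _ = ∑ u ∈ t.image (fun n => N - n + 2), (u : ℝ) ^ (-s) :=
        (Finset.sum_image (f := fun u : ℕ => (u : ℝ) ^ (-s)) hinj).symm
    _ ≤ Zc s := (summable_zc hs).sum_le_tsum _ (fun u _ => Real.rpow_nonneg (Nat.cast_nonneg u) _)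

open Classical in
lemma inner_tsum_le {d : ℕ} (hd : 1 ≤ d) {α : ℝ} (hα : 0 < α) {R : ℝ} (hR : 1 ≤ R)
    (i k ℓ : Fin d → ℤ) :
    ∑' j : Fin d → ℤ,
        (if ‖ℓ - k‖ ≤ R ∧ ‖ℓ - i‖ ≤ R ∧ ¬ ‖j - ℓ‖ ≤ R
          then (1 + ‖i - j‖) ^ (-(2 * (d : ℝ) + α)) else 0)
      ≤ ((d : ℝ) * 2 ^ d) *
          (((⌊R⌋₊ - nnu (ℓ - i) : ℕ) : ℝ) + 2) ^ (-((d : ℝ) + α / 2)) * Zc (1 + α / 2) := by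
  have hR0 : (0 : ℝ) ≤ R := by linarith
  set N : ℕ := ⌊R⌋₊ with hN
  set m : ℕ := N - nnu (ℓ - i) with hm
  have hbnd : (0 : ℝ) ≤ ((d : ℝ) * 2 ^ d) * (((m : ℕ) : ℝ) + 2) ^ (-((d : ℝ) + α / 2))
      * Zc (1 + α / 2) := by
    apply mul_nonneg _ (Zc_nonneg _)
    positivity
  apply tsum_le_of_sum_le' hbnd
  intro F
  by_cases hc : nnu (ℓ - i) ≤ N
  · calc ∑ j ∈ F, (if ‖ℓ - k‖ ≤ R ∧ ‖ℓ - i‖ ≤ R ∧ ¬ ‖j - ℓ‖ ≤ R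
            then (1 + ‖i - j‖) ^ (-(2 * (d : ℝ) + α)) else 0)
        ≤ ∑ j ∈ F, (if m + 1 ≤ nnu (j - i)
            then (1 + ‖i - j‖) ^ (-(2 * (d : ℝ) + α)) else 0) := by
          refine Finset.sum_le_sum fun j _ => ?_
          split_ifs with h1 h2 h2
          · exact le_rfl
          · exfalso
            apply h2
            have h4 : ¬ nnu (j - ℓ) ≤ N := by
              intro hle
              apply h1.2.2
              rw [norm_eq_nnu hd]
              calc (nnu (j - ℓ) : ℝ) ≤ (N : ℝ) := by exact_mod_cast hle
                _ ≤ R := Nat.floor_le hR0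
            have h5 : nnu (i - ℓ) = nnu (ℓ - i) := by rw [← nnu_neg (ℓ - i), neg_sub]
            have h6 : nnu (j - ℓ) ≤ nnu (j - i) + nnu (i - ℓ) := by
              have heq : j - ℓ = (j - i) + (i - ℓ) := by abel
              rw [heq]
              exact nnu_add_le _ _
            omega
          · exact Real.rpow_nonneg (by positivity) _
          · exact le_rfl
      _ = ∑ j ∈ F.filter fun j => m + 1 ≤ nnu (j - i),
            (1 + ‖i - j‖) ^ (-(2 * (d : ℝ) + α)) :=
          (Finset.sum_filter _ _).symm
      _ ≤ _ := tail_sum hd hα i m _ fun j hj => (Finset.mem_filter.1 hj).2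
  · have hz : ∀ j : Fin d → ℤ, (if ‖ℓ - k‖ ≤ R ∧ ‖ℓ - i‖ ≤ R ∧ ¬ ‖j - ℓ‖ ≤ R
        then (1 + ‖i - j‖) ^ (-(2 * (d : ℝ) + α)) else 0) = 0 := by
      intro j
      rw [if_neg]
      rintro ⟨-, h2, -⟩
      apply hc
      rw [hN]
      apply Nat.le_floor
      rw [← norm_eq_nnu hd]
      exact h2
    calc ∑ j ∈ F, (if ‖ℓ - k‖ ≤ R ∧ ‖ℓ - i‖ ≤ R ∧ ¬ ‖j - ℓ‖ ≤ R
          then (1 + ‖i - j‖) ^ (-(2 * (d : ℝ) + α)) else 0)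
        = 0 := Finset.sum_eq_zero fun j _ => hz j
      _ ≤ _ := hbnd

open Classical in
theorem boundary_weight_estimate (d : ℕ) (hd : 1 ≤ d) (α : ℝ) (hα : 0 < α) :
    ∃ C : ℝ, 0 < C ∧ ∀ R : ℝ, 1 ≤ R → (¬ ∃ z : ℤ, (z : ℝ) = R) →
      (∃ z : ℤ, (z : ℝ) = 2 * R) →
      ∀ i k : Fin d → ℤ, ‖i - k‖ ≤ 2 * R →
        ∑' ℓ : Fin d → ℤ, ∑' j : Fin d → ℤ,
            (if ‖ℓ - k‖ ≤ R ∧ ‖ℓ - i‖ ≤ R ∧ ¬ ‖j - ℓ‖ ≤ R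
              then (1 + ‖i - j‖) ^ (-(2 * (d : ℝ) + α)) else 0)
          ≤ C * R ^ ((d : ℝ) - 1) := by
  set κ : ℝ := (d : ℝ) * 2 ^ d with hκ
  have hκ0 : 0 < κ := by
    rw [hκ]
    have : (0:ℝ) < (d:ℝ) := by exact_mod_cast hd
    positivity
  set Zq : ℝ := Zc (1 + α / 2) with hZq
  set Zγ : ℝ := Zc ((d : ℝ) + α / 2) with hZγ
  have hZq0 : 0 ≤ Zq := Zc_nonneg _
  have hZγ0 : 0 ≤ Zγ := Zc_nonneg _
  set B : ℝ := κ * κ * Zq * Zγ * 2 ^ (d - 1) with hB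
  have hB0 : 0 ≤ B := by
    rw [hB]
    apply mul_nonneg _ (by positivity)
    apply mul_nonneg _ hZγ0
    apply mul_nonneg _ hZq0
    positivity
  refine ⟨B + 1, by linarith, ?_⟩
  intro R hR _ _ i k _
  have hR0 : (0 : ℝ) ≤ R := by linarith
  have hRpos : (0 : ℝ) < R := by linarith
  set N : ℕ := ⌊R⌋₊ with hN
  have hre : (0:ℝ) ≤ R ^ ((d : ℝ) - 1) := Real.rpow_nonneg hR0 _
  apply tsum_le_of_sum_le' (by nlinarith)
  intro G
  set bfun : ℕ → ℝ := fun t => κ * (((N - t : ℕ) : ℝ) + 2) ^ (-((d : ℝ) + α / 2)) * Zq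
    with hbfun
  have hbfun0 : ∀ t, 0 ≤ bfun t := by
    intro t
    apply mul_nonneg _ hZq0
    positivity
  have hbound : ∀ ℓ ∈ G,
      (∑' j : Fin d → ℤ,
        (if ‖ℓ - k‖ ≤ R ∧ ‖ℓ - i‖ ≤ R ∧ ¬ ‖j - ℓ‖ ≤ R
          then (1 + ‖i - j‖) ^ (-(2 * (d : ℝ) + α)) else 0))
      ≤ if nnu (ℓ - i) ≤ N then bfun (nnu (ℓ - i)) else 0 := by
    intro ℓ _
    by_cases hc : nnu (ℓ - i) ≤ N
    · rw [if_pos hc]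
      exact inner_tsum_le hd hα hR i k ℓ
    · rw [if_neg hc]
      have hz : ∀ j : Fin d → ℤ, (if ‖ℓ - k‖ ≤ R ∧ ‖ℓ - i‖ ≤ R ∧ ¬ ‖j - ℓ‖ ≤ R
          then (1 + ‖i - j‖) ^ (-(2 * (d : ℝ) + α)) else 0) = 0 := by
        intro j
        rw [if_neg]
        rintro ⟨-, h2, -⟩
        apply hc
        rw [hN]
        apply Nat.le_floor
        rw [← norm_eq_nnu hd]
        exact h2
      exact le_of_eq ((tsum_congr hz).trans tsum_zero)
  set G' := G.filter fun ℓ => nnu (ℓ - i) ≤ N with hG'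
  have hmemN : ∀ t ∈ G'.image fun ℓ => nnu (ℓ - i), t ≤ N := by
    intro t ht
    obtain ⟨ℓ, hℓ, rfl⟩ := Finset.mem_image.1 ht
    exact (Finset.mem_filter.1 hℓ).2
  have hA : ((( N + 1) ^ (d - 1) : ℕ) : ℝ) ≤ 2 ^ (d - 1) * R ^ ((d : ℝ) - 1) := by
    have h1 : ((N : ℝ) + 1) ≤ 2 * R := by
      have := Nat.floor_le hR0
      rw [hN] at *
      linarith
    have h6 : ((d - 1 : ℕ) : ℝ) = (d : ℝ) - 1 := by
      push_cast [Nat.cast_sub hd]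
      ring
    calc (((N + 1) ^ (d - 1) : ℕ) : ℝ) = ((N : ℝ) + 1) ^ (d - 1 : ℕ) := by push_cast; ring
      _ ≤ (2 * R) ^ (d - 1 : ℕ) := pow_le_pow_left₀ (by positivity) h1 _
      _ = 2 ^ (d - 1) * R ^ (d - 1 : ℕ) := mul_pow 2 R (d - 1)
      _ = 2 ^ (d - 1) * R ^ ((d : ℝ) - 1) := by
          rw [← Real.rpow_natCast R (d - 1), h6]
  calc ∑ ℓ ∈ G, (∑' j : Fin d → ℤ,
        (if ‖ℓ - k‖ ≤ R ∧ ‖ℓ - i‖ ≤ R ∧ ¬ ‖j - ℓ‖ ≤ R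
          then (1 + ‖i - j‖) ^ (-(2 * (d : ℝ) + α)) else 0))
      ≤ ∑ ℓ ∈ G, (if nnu (ℓ - i) ≤ N then bfun (nnu (ℓ - i)) else 0) :=
        Finset.sum_le_sum hbound
    _ = ∑ ℓ ∈ G', bfun (nnu (ℓ - i)) := (Finset.sum_filter _ _).symm
    _ = ∑ t ∈ G'.image fun ℓ => nnu (ℓ - i),
          (G'.filter fun ℓ => nnu (ℓ - i) = t).card • bfun t :=
        Finset.sum_comp bfun (fun ℓ => nnu (ℓ - i))
    _ ≤ ∑ t ∈ G'.image fun ℓ => nnu (ℓ - i),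
          (κ * (((N + 1) ^ (d - 1) : ℕ) : ℝ)) * bfun t := by
        refine Finset.sum_le_sum fun t ht => ?_
        rw [nsmul_eq_mul]
        apply mul_le_mul_of_nonneg_right _ (hbfun0 t)
        have hcf := card_fiber hd G' i t
        have hle : (d : ℕ) * 2 ^ d * (t + 1) ^ (d - 1) ≤ d * 2 ^ d * (N + 1) ^ (d - 1) := by
          apply Nat.mul_le_mul_left
          exact Nat.pow_le_pow_left (by have := hmemN t ht; omega) _
        calc ((G'.filter fun ℓ => nnu (ℓ - i) = t).card : ℝ)
            ≤ ((d * 2 ^ d * (N + 1) ^ (d - 1) : ℕ) : ℝ) := by exact_mod_cast le_trans hcf hle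
          _ = κ * (((N + 1) ^ (d - 1) : ℕ) : ℝ) := by rw [hκ]; push_cast; ring
    _ = ∑ t ∈ G'.image fun ℓ => nnu (ℓ - i),
          ((κ * (((N + 1) ^ (d - 1) : ℕ) : ℝ)) * (κ * Zq)) *
            ((((N - t : ℕ) : ℝ) + 2) ^ (-((d : ℝ) + α / 2))) := by
        refine Finset.sum_congr rfl fun t _ => ?_
        rw [hbfun]
        ring
    _ = (κ * (((N + 1) ^ (d - 1) : ℕ) : ℝ)) * (κ * Zq) *
          ∑ t ∈ G'.image fun ℓ => nnu (ℓ - i),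
            (((N - t : ℕ) : ℝ) + 2) ^ (-((d : ℝ) + α / 2)) := by
        rw [← Finset.mul_sum]
    _ ≤ (κ * (((N + 1) ^ (d - 1) : ℕ) : ℝ)) * (κ * Zq) * Zγ := by
        apply mul_le_mul_of_nonneg_left
        · rw [hZγ]
          exact sum_rpow_le2 (by
            have : (1:ℝ) ≤ (d:ℝ) := by exact_mod_cast hd
            linarith) N _ hmemN
        · apply mul_nonneg
          · apply mul_nonneg hκ0.le (Nat.cast_nonneg _)
          · exact mul_nonneg hκ0.le hZq0
    _ ≤ (B + 1) * R ^ ((d : ℝ) - 1) := by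
        have hfin : (κ * (((N + 1) ^ (d - 1) : ℕ) : ℝ)) * (κ * Zq) * Zγ
            ≤ κ * (2 ^ (d - 1) * R ^ ((d : ℝ) - 1)) * (κ * Zq) * Zγ := by
          apply mul_le_mul_of_nonneg_right _ hZγ0
          apply mul_le_mul_of_nonneg_right _ (mul_nonneg hκ0.le hZq0)
          exact mul_le_mul_of_nonneg_left hA hκ0.le
        have heq : κ * (2 ^ (d - 1) * R ^ ((d : ℝ) - 1)) * (κ * Zq) * Zγ
            = B * R ^ ((d : ℝ) - 1) := by rw [hB]; ring
        have hfin2 : B * R ^ ((d : ℝ) - 1) ≤ (B + 1) * R ^ ((d : ℝ) - 1) := by nlinarith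
        linarith [hfin, heq ▸ hfin, hfin2]
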